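/- Let s, t > 0 and let H_t(z) = z + t·(z - √(z² - 4s))/(2s) on the upper half-plane, with the branch of √ as above. Then for w in the closed upper half-plane, the function H_t⁻¹(w) = ((2s+t)w + t√(w² - 4(s+t)))/(2(s+t)) satisfies H_t(H_t⁻¹(w)) = w, where √(w² - 4(s+t)) uses the analogous branch (asymptotic to w, with nonneg imaginary part on the boundary values from above). -/

import Mathlib

open Filter Complex Topology

lemma sign_lemma (c : ℝ) (hc : 0 < c) (f : ℂ → ℂ)
    (hsq : ∀ z : ℂ, 0 ≤ z.im → f z ^ 2 = z ^ 2 - 4 * (c : ℂ))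
    (hcont : ContinuousOn f {z : ℂ | 0 ≤ z.im})
    (hasymp : Tendsto (fun z => f z / z)
      (comap (fun z : ℂ => ‖z‖) atTop ⊓ Filter.principal {z : ℂ | 0 ≤ z.im}) (nhds 1)) :
    ∀ z : ℂ, 0 ≤ z.im → 0 ≤ (f z).im := by
  set V : Set ℂ := {z : ℂ | 0 < z.im} ∪ {z : ℂ | z.im = 0 ∧ z.re ^ 2 < 4 * c} with hV
  have hVsub : V ⊆ {z : ℂ | 0 ≤ z.im} := by
    rintro z (hz | hz)
    · show (0:ℝ) ≤ z.im; exact le_of_lt hz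
    · show (0:ℝ) ≤ z.im; exact le_of_eq hz.1.symm
  -- closure of open UHP contains the closed UHP
  have hcl : {z : ℂ | 0 ≤ z.im} ⊆ closure {z : ℂ | 0 < z.im} := by
    intro z hz
    have htd : Tendsto (fun n : ℕ => z + ((((n:ℝ) + 1)⁻¹ : ℝ) : ℂ) * I) atTop (nhds z) := by
      have h0 : Tendsto (fun n : ℕ => (((n:ℝ) + 1)⁻¹ : ℝ)) atTop (nhds 0) := by
        simpa only [one_div] using tendsto_one_div_add_atTop_nhds_zero_nat (𝕜 := ℝ)
      have h2 : Tendsto (fun n : ℕ => ((((n:ℝ) + 1)⁻¹ : ℝ) : ℂ)) atTop (nhds ((0:ℝ):ℂ)) :=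
        (Complex.continuous_ofReal.tendsto _).comp h0
      have := h2.mul_const I
      simpa using tendsto_const_nhds.add this
    refine mem_closure_of_tendsto htd ?_
    filter_upwards with n
    have hpos : (0:ℝ) < ((n:ℝ) + 1)⁻¹ := by positivity
    show (0:ℝ) < (z + ((((n:ℝ) + 1)⁻¹ : ℝ) : ℂ) * I).im
    simp only [Complex.add_im, Complex.mul_im, Complex.I_im, Complex.I_re,
      Complex.ofReal_re, Complex.ofReal_im]
    have hzi : (0:ℝ) ≤ z.im := hz
    nlinarith
  -- V is preconnected
  have hVconn : IsPreconnected V := by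
    refine (convex_halfSpace_im_gt 0).isPreconnected.subset_closure ?_ ?_
    · intro z hz; exact Or.inl hz
    · exact fun z hz => hcl (hVsub hz)
  -- Im (f z) ≠ 0 on V
  have hne : ∀ z ∈ V, (f z).im ≠ 0 := by
    rintro z hz h0
    have hzim : 0 ≤ z.im := hVsub hz
    have hsqz := hsq z hzim
    have him2 : ((f z) ^ 2).im = 0 := by
      simp [pow_two, Complex.mul_im, h0]
    have hre2 : 0 ≤ ((f z) ^ 2).re := by
      simp only [pow_two, Complex.mul_re, h0]
      nlinarith [sq_nonneg (f z).re]
    rw [hsqz] at him2 hre2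
    simp only [Complex.sub_im, Complex.sub_re, pow_two, Complex.mul_im, Complex.mul_re,
      Complex.ofReal_re, Complex.ofReal_im] at him2 hre2
    have hprod : z.re * z.im = 0 := by
      norm_num at him2; nlinarith [him2]
    rcases hz with hz | hz
    · have hre0 : z.re = 0 := by
        rcases mul_eq_zero.1 hprod with h | h
        · exact h
        · exact absurd h (ne_of_gt hz)
      rw [hre0] at hre2
      norm_num at hre2
      nlinarith
    · rcases hz with ⟨h1, h2⟩
      rw [h1] at hre2
      norm_num at hre2
      nlinarith
  -- a point in V with positive Im (f z)
  have hex : ∃ z ∈ V, 0 < (f z).im := by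
    have hseq : Tendsto (fun n : ℕ => (((n:ℝ) + 1 : ℝ) : ℂ) * I)
        (atTop) (comap (fun z : ℂ => ‖z‖) atTop ⊓ Filter.principal {z : ℂ | 0 ≤ z.im}) := by
      rw [tendsto_inf]
      constructor
      · rw [tendsto_comap_iff]
        have habs : ∀ n : ℕ, (‖((((n:ℝ) + 1 : ℝ) : ℂ) * I)‖) = (n:ℝ) + 1 := by
          intro n
          rw [norm_mul, Complex.norm_I, mul_one, Complex.norm_real, Real.norm_of_nonneg]
          positivity
        simp only [Function.comp_def, habs]
        exact tendsto_atTop_add_const_right _ 1 tendsto_natCast_atTop_atTop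
      · rw [tendsto_principal]
        filter_upwards with n
        show (0:ℝ) ≤ ((((n:ℝ) + 1 : ℝ) : ℂ) * I).im
        simp [Complex.mul_im]
        positivity
    have htt := hasymp.comp hseq
    rw [Metric.tendsto_nhds] at htt
    have h12 := htt (1/2) (by norm_num)
    rw [eventually_atTop] at h12
    obtain ⟨N, hN⟩ := h12
    set z₀ : ℂ := (((N:ℝ) + 1 : ℝ) : ℂ) * I with hz₀
    have hz₀im : z₀.im = (N:ℝ) + 1 := by
      simp [hz₀, Complex.mul_im]
    refine ⟨z₀, Or.inl ?_, ?_⟩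
    · show (0:ℝ) < z₀.im
      rw [hz₀im]; positivity
    · have hd := hN N le_rfl
      simp only [Function.comp_def] at hd
      rw [Complex.dist_eq] at hd
      have hz₀ne : z₀ ≠ 0 := by
        intro h0
        rw [h0] at hz₀im
        simp at hz₀im
        have : (0:ℝ) ≤ (N:ℝ) := Nat.cast_nonneg N
        linarith
      have hfz : f z₀ = (f z₀ / z₀) * z₀ := by field_simp
      have hure : 1/2 < (f z₀ / z₀).re := by
        have hh := Complex.abs_re_le_norm (f z₀ / z₀ - 1)
        rw [Complex.sub_re, Complex.one_re] at hh
        have h2 : |(f z₀ / z₀).re - 1| < 1/2 := lt_of_le_of_lt hh hd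
        cases abs_lt.1 h2 with
        | intro h3 h4 => linarith
      rw [hfz]
      have : ((f z₀ / z₀) * z₀).im = (f z₀ / z₀).re * z₀.im + (f z₀ / z₀).im * z₀.re := by
        simp [Complex.mul_im]
      rw [this, hz₀im]
      have hz₀re : z₀.re = 0 := by simp [hz₀, Complex.mul_re]
      rw [hz₀re]
      have : (0:ℝ) ≤ (N:ℝ) := Nat.cast_nonneg N
      nlinarith
  -- Im f > 0 on all of V via IVT
  have hpos : ∀ z ∈ V, 0 < (f z).im := by
    intro z hz
    by_contra hle
    push_neg at hle
    obtain ⟨z₀, hz₀V, hz₀pos⟩ := hex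
    have hcontV : ContinuousOn (fun z => (f z).im) V :=
      (Complex.continuous_im.comp_continuousOn (hcont.mono hVsub))
    have hivt := hVconn.intermediate_value hz hz₀V hcontV
    have h0mem : (0:ℝ) ∈ Set.Icc (f z).im (f z₀).im := ⟨hle, le_of_lt hz₀pos⟩
    obtain ⟨z₁, hz₁V, hz₁⟩ := hivt h0mem
    exact hne z₁ hz₁V hz₁
  -- extend to the boundary
  intro z hz
  rcases lt_or_eq_of_le hz with h | h
  · exact le_of_lt (hpos z (Or.inl h))
  · have hpath : Tendsto (fun ε : ℝ => z + (ε:ℂ) * I) (nhdsWithin 0 (Set.Ioi 0)) (nhds z) := by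
      have h1 : Tendsto (fun ε : ℝ => ((ε:ℝ):ℂ)) (nhds 0) (nhds ((0:ℝ):ℂ)) :=
        (Complex.continuous_ofReal.tendsto _)
      have h2 := h1.mul_const I
      have : Tendsto (fun ε : ℝ => z + (ε:ℂ) * I) (nhds 0) (nhds z) := by
        simpa using tendsto_const_nhds.add h2
      exact this.mono_left nhdsWithin_le_nhds
    have hmem : ∀ᶠ ε : ℝ in nhdsWithin 0 (Set.Ioi 0), z + (ε:ℂ) * I ∈ V := by
      filter_upwards [self_mem_nhdsWithin] with ε hε
      refine Or.inl ?_
      show (0:ℝ) < (z + (ε:ℂ) * I).im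
      simp only [Complex.add_im, Complex.mul_im, Complex.I_im, Complex.I_re,
        Complex.ofReal_re, Complex.ofReal_im, ← h]
      simpa using (hε : (0:ℝ) < ε)
    have hfc : Tendsto (fun ε : ℝ => f (z + (ε:ℂ) * I)) (nhdsWithin 0 (Set.Ioi 0))
        (nhds (f z)) := by
      have hcw := (hcont z hz).tendsto
      refine hcw.comp ?_
      rw [tendsto_nhdsWithin_iff]
      exact ⟨hpath, hmem.mono fun ε hε => hVsub hε⟩
    have htim : Tendsto (fun ε : ℝ => (f (z + (ε:ℂ) * I)).im) (nhdsWithin 0 (Set.Ioi 0))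
        (nhds ((f z).im)) := (Complex.continuous_im.tendsto _).comp hfc
    refine ge_of_tendsto htim ?_
    filter_upwards [hmem] with ε hε
    exact le_of_lt (hpos _ hε)

noncomputable def Zfun (s t : ℝ) (sq2 : ℂ → ℂ) : ℂ → ℂ :=
  fun u => ((2*(s:ℂ)+t)*u + (t:ℂ)*sq2 u)/(2*((s:ℂ)+t))

noncomputable def Cfun (s t : ℝ) (sq2 : ℂ → ℂ) : ℂ → ℂ :=
  fun u => ((t:ℂ)*u + (2*(s:ℂ)+t)*sq2 u)/(2*((s:ℂ)+t))

lemma lin_im (α β γ : ℝ) (u v : ℂ) :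
    ((((α:ℝ):ℂ)*u + ((β:ℝ):ℂ)*v) / ((γ:ℝ):ℂ)).im = (α*u.im + β*v.im)/γ := by
  simp only [Complex.div_ofReal_im, Complex.add_im, Complex.mul_im, Complex.ofReal_re,
    Complex.ofReal_im]
  ring

lemma Zfun_eq (s t : ℝ) (sq2 : ℂ → ℂ) (u : ℂ) :
    Zfun s t sq2 u = (((2*s+t:ℝ):ℂ)*u + ((t:ℝ):ℂ)*sq2 u)/(((2*(s+t):ℝ)):ℂ) := by
  simp only [Zfun]; push_cast; ring

lemma Cfun_eq (s t : ℝ) (sq2 : ℂ → ℂ) (u : ℂ) :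
    Cfun s t sq2 u = (((t:ℝ):ℂ)*u + ((2*s+t:ℝ):ℂ)*sq2 u)/(((2*(s+t):ℝ)):ℂ) := by
  simp only [Cfun]; push_cast; ring

section Key

variable (s t : ℝ) (hs : 0 < s) (ht : 0 < t) (sq1 sq2 : ℂ → ℂ)
    (h1_sq : ∀ z : ℂ, 0 ≤ z.im → sq1 z ^ 2 = z ^ 2 - 4 * (s : ℂ))
    (h2_sq : ∀ z : ℂ, 0 ≤ z.im → sq2 z ^ 2 = z ^ 2 - 4 * ((s : ℂ) + t))
    (him1 : ∀ z : ℂ, 0 ≤ z.im → 0 ≤ (sq1 z).im)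
    (him2 : ∀ z : ℂ, 0 ≤ z.im → 0 ≤ (sq2 z).im)

include hs ht him2 in
lemma Zfun_im (u : ℂ) (hu : 0 ≤ u.im) : 0 ≤ (Zfun s t sq2 u).im := by
  rw [Zfun_eq, lin_im]
  have := him2 u hu
  positivity

include hs ht h1_sq h2_sq him2 in
lemma prod_zero (u : ℂ) (hu : 0 ≤ u.im) :
    (sq1 (Zfun s t sq2 u) - Cfun s t sq2 u) * (sq1 (Zfun s t sq2 u) + Cfun s t sq2 u) = 0 := by
  have hst : ((s:ℂ) + t) ≠ 0 := by
    have : ((s+t:ℝ):ℂ) ≠ 0 := Complex.ofReal_ne_zero.mpr (by positivity)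
    push_cast at this; exact this
  have h1 := h1_sq (Zfun s t sq2 u) (Zfun_im s t hs ht sq2 him2 u hu)
  have hq := h2_sq u hu
  have key : (Zfun s t sq2 u)^2 - (Cfun s t sq2 u)^2 = 4*(s:ℂ) := by
    simp only [Zfun, Cfun]
    field_simp
    linear_combination (-(4:ℂ)*(s:ℂ)*((s:ℂ)+t)) * hq
  linear_combination h1 + key

include hs ht h1_sq h2_sq him1 him2 in
lemma key_interior (u : ℂ) (hu : 0 ≤ u.im) (hu2 : 0 < u.im ∨ u.re^2 < 4*(s+t)) :
    sq1 (Zfun s t sq2 u) = Cfun s t sq2 u := by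
  have hq2im := him2 u hu
  have hCim : 0 ≤ (Cfun s t sq2 u).im := by
    rw [Cfun_eq, lin_im]; positivity
  have hCpos : 0 < (Cfun s t sq2 u).im := by
    rcases lt_or_eq_of_le hCim with h | h
    · exact h
    exfalso
    -- C u is real; then (Z u)^2 = C^2 + 4s is real and ≥ 4s
    have hst : ((s:ℂ) + t) ≠ 0 := by
      have : ((s+t:ℝ):ℂ) ≠ 0 := Complex.ofReal_ne_zero.mpr (by positivity)
      push_cast at this; exact this
    have hq := h2_sq u hu
    have key : (Zfun s t sq2 u)^2 = (Cfun s t sq2 u)^2 + 4*(s:ℂ) := by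
      simp only [Zfun, Cfun]
      field_simp
      linear_combination (-(4:ℂ)*(s:ℂ)*((s:ℂ)+t)) * hq
    set Zu := Zfun s t sq2 u with hZu
    set Cu := Cfun s t sq2 u with hCu
    have hCimz : Cu.im = 0 := h.symm
    have himZ2 : (Zu^2).im = 0 := by
      rw [key]
      simp [pow_two, Complex.mul_im, hCimz]
    have hreZ2 : 4*s ≤ (Zu^2).re := by
      rw [key]
      simp only [Complex.add_re, pow_two, Complex.mul_re, hCimz]
      norm_num
      nlinarith [sq_nonneg Cu.re]
    simp only [pow_two, Complex.mul_im, Complex.mul_re] at himZ2 hreZ2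
    have hprod : Zu.re * Zu.im = 0 := by nlinarith [himZ2]
    have hZuim : 0 ≤ Zu.im := Zfun_im s t hs ht sq2 him2 u hu
    have hZim0 : Zu.im = 0 := by
      rcases mul_eq_zero.1 hprod with hh | hh
      · exfalso; rw [hh] at hreZ2; nlinarith
      · exact hh
    -- then u.im = 0 and (sq2 u).im = 0
    have hZimf : Zu.im = ((2*s+t)*u.im + t*(sq2 u).im)/(2*(s+t)) := by
      rw [hZu, Zfun_eq, lin_im]
    rw [hZim0] at hZimf
    have hA : (2*s+t)*u.im + t*(sq2 u).im = 0 := by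
      rcases div_eq_zero_iff.1 hZimf.symm with hh | hh
      · exact hh
      · exfalso; nlinarith
    have huim0 : u.im = 0 ∧ (sq2 u).im = 0 := by
      constructor <;> nlinarith
    rcases hu2 with hpos | hlt
    · rw [huim0.1] at hpos; exact lt_irrefl _ hpos
    · -- sq2 u real, (sq2 u)^2 = u^2 - 4(s+t) with u real: contradiction
      have hre : ((sq2 u)^2).re = (u^2 - 4*((s:ℂ)+t)).re := by rw [hq]
      simp only [pow_two, Complex.mul_re, Complex.sub_re, huim0.1, huim0.2] at hre
      norm_num at hre
      nlinarith [sq_nonneg (sq2 u).re]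
  -- now conclude
  have hprod := prod_zero s t hs ht sq1 sq2 h1_sq h2_sq him2 u hu
  rcases mul_eq_zero.1 hprod with h | h
  · exact sub_eq_zero.1 h
  · exfalso
    have : sq1 (Zfun s t sq2 u) = -Cfun s t sq2 u := by linear_combination h
    have h2 := him1 (Zfun s t sq2 u) (Zfun_im s t hs ht sq2 him2 u hu)
    rw [this] at h2
    simp only [Complex.neg_im] at h2
    linarith

end Key

section Key2

variable (s t : ℝ) (hs : 0 < s) (ht : 0 < t) (sq1 sq2 : ℂ → ℂ)
    (h1_sq : ∀ z : ℂ, 0 ≤ z.im → sq1 z ^ 2 = z ^ 2 - 4 * (s : ℂ))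
    (h2_sq : ∀ z : ℂ, 0 ≤ z.im → sq2 z ^ 2 = z ^ 2 - 4 * ((s : ℂ) + t))
    (h1_cont : ContinuousOn sq1 {z : ℂ | 0 ≤ z.im})
    (h2_cont : ContinuousOn sq2 {z : ℂ | 0 ≤ z.im})
    (him1 : ∀ z : ℂ, 0 ≤ z.im → 0 ≤ (sq1 z).im)
    (him2 : ∀ z : ℂ, 0 ≤ z.im → 0 ≤ (sq2 z).im)

include hs ht h1_sq h2_sq h1_cont h2_cont him1 him2 in
lemma key_full (u : ℂ) (hu : 0 ≤ u.im) :
    sq1 (Zfun s t sq2 u) = Cfun s t sq2 u := by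
  rcases lt_or_eq_of_le hu with h | h
  · exact key_interior s t hs ht sq1 sq2 h1_sq h2_sq him1 him2 u hu (Or.inl h)
  -- u.im = 0
  by_cases hre : u.re ^ 2 < 4*(s+t)
  · exact key_interior s t hs ht sq1 sq2 h1_sq h2_sq him1 him2 u hu (Or.inr hre)
  -- boundary case: approximate from above
  have hZcont : ContinuousOn (Zfun s t sq2) {z : ℂ | 0 ≤ z.im} := by
    apply ContinuousOn.div_const
    exact (continuousOn_const.mul continuousOn_id).add (continuousOn_const.mul h2_cont)
  have hCcont : ContinuousOn (Cfun s t sq2) {z : ℂ | 0 ≤ z.im} := by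
    apply ContinuousOn.div_const
    exact (continuousOn_const.mul continuousOn_id).add (continuousOn_const.mul h2_cont)
  have hFcont : ContinuousOn (fun v => sq1 (Zfun s t sq2 v) - Cfun s t sq2 v)
      {z : ℂ | 0 ≤ z.im} := by
    refine ContinuousOn.sub ?_ hCcont
    exact h1_cont.comp hZcont (fun v hv => Zfun_im s t hs ht sq2 him2 v hv)
  have hpath : Tendsto (fun ε : ℝ => u + (ε:ℂ) * I) (nhdsWithin 0 (Set.Ioi 0)) (nhds u) := by
    have h1 : Tendsto (fun ε : ℝ => ((ε:ℝ):ℂ)) (nhds 0) (nhds ((0:ℝ):ℂ)) :=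
      (Complex.continuous_ofReal.tendsto _)
    have h2 := h1.mul_const I
    have h3 : Tendsto (fun ε : ℝ => u + (ε:ℂ) * I) (nhds 0) (nhds u) := by
      simpa using tendsto_const_nhds.add h2
    exact h3.mono_left nhdsWithin_le_nhds
  have hmem : ∀ᶠ ε : ℝ in nhdsWithin 0 (Set.Ioi 0), 0 < (u + (ε:ℂ) * I).im := by
    filter_upwards [self_mem_nhdsWithin] with ε hε
    simp only [Complex.add_im, Complex.mul_im, Complex.I_im, Complex.I_re,
      Complex.ofReal_re, Complex.ofReal_im, ← h]
    simpa using (hε : (0:ℝ) < ε)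
  have hfc : Tendsto (fun ε : ℝ => sq1 (Zfun s t sq2 (u + (ε:ℂ) * I)) -
      Cfun s t sq2 (u + (ε:ℂ) * I)) (nhdsWithin 0 (Set.Ioi 0))
      (nhds (sq1 (Zfun s t sq2 u) - Cfun s t sq2 u)) := by
    refine (hFcont u hu).tendsto.comp ?_
    rw [tendsto_nhdsWithin_iff]
    exact ⟨hpath, hmem.mono fun ε hε => le_of_lt hε⟩
  have hzero : Tendsto (fun ε : ℝ => sq1 (Zfun s t sq2 (u + (ε:ℂ) * I)) -
      Cfun s t sq2 (u + (ε:ℂ) * I)) (nhdsWithin 0 (Set.Ioi 0)) (nhds 0) := by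
    refine Tendsto.congr' ?_ (tendsto_const_nhds : Tendsto (fun _ : ℝ => (0:ℂ)) (nhdsWithin 0 (Set.Ioi 0)) (nhds 0))
    filter_upwards [hmem] with ε hε
    exact (sub_eq_zero.2 (key_interior s t hs ht sq1 sq2 h1_sq h2_sq him1 him2 _
      (le_of_lt hε) (Or.inl hε))).symm
  have := tendsto_nhds_unique hfc hzero
  exact sub_eq_zero.1 this

end Key2

/-- With `H_t(z) = z + t(z - √(z²-4s))/(2s)` and
`H_t⁻¹(w) = ((2s+t)w + t√(w²-4(s+t)))/(2(s+t))`, where both square roots denote the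
branches on the closed upper half-plane (continuous there, squaring to the correct value,
and asymptotic to `z` at infinity), one has `H_t(H_t⁻¹(w)) = w` for `w` in the closed
upper half-plane. -/
theorem stmt_18 (s t : ℝ) (hs : 0 < s) (ht : 0 < t)
    (sq1 sq2 : ℂ → ℂ)
    (h1_sq : ∀ z : ℂ, 0 ≤ z.im → sq1 z ^ 2 = z ^ 2 - 4 * (s : ℂ))
    (h1_cont : ContinuousOn sq1 {z : ℂ | 0 ≤ z.im})
    (h1_asymp : Tendsto (fun z => sq1 z / z)
      (comap (fun z : ℂ => ‖z‖) atTop ⊓ Filter.principal {z : ℂ | 0 ≤ z.im}) (nhds 1))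
    (h2_sq : ∀ z : ℂ, 0 ≤ z.im → sq2 z ^ 2 = z ^ 2 - 4 * ((s : ℂ) + t))
    (h2_cont : ContinuousOn sq2 {z : ℂ | 0 ≤ z.im})
    (h2_asymp : Tendsto (fun z => sq2 z / z)
      (comap (fun z : ℂ => ‖z‖) atTop ⊓ Filter.principal {z : ℂ | 0 ≤ z.im}) (nhds 1))
    (w : ℂ) (hw : 0 ≤ w.im) :
    (fun z : ℂ => z + (t : ℂ) * ((z - sq1 z) / (2 * (s : ℂ))))
      ((((2 * s + t : ℝ) : ℂ) * w + (t : ℂ) * sq2 w) / (2 * ((s : ℂ) + t))) = w := by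
  have him1 : ∀ z : ℂ, 0 ≤ z.im → 0 ≤ (sq1 z).im :=
    sign_lemma s hs sq1 h1_sq h1_cont h1_asymp
  have him2 : ∀ z : ℂ, 0 ≤ z.im → 0 ≤ (sq2 z).im := by
    refine sign_lemma (s + t) (by positivity) sq2 ?_ h2_cont h2_asymp
    intro z hz
    push_cast
    exact h2_sq z hz
  have key := key_full s t hs ht sq1 sq2 h1_sq h2_sq h1_cont h2_cont him1 him2 w hw
  have harg : ((((2 * s + t : ℝ) : ℂ) * w + (t : ℂ) * sq2 w) / (2 * ((s : ℂ) + t)))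
      = Zfun s t sq2 w := by
    simp only [Zfun]; push_cast; ring
  show (((((2 * s + t : ℝ) : ℂ) * w + (t : ℂ) * sq2 w) / (2 * ((s : ℂ) + t))) +
      (t : ℂ) * ((((((2 * s + t : ℝ) : ℂ) * w + (t : ℂ) * sq2 w) / (2 * ((s : ℂ) + t))) -
      sq1 (((((2 * s + t : ℝ) : ℂ) * w + (t : ℂ) * sq2 w) / (2 * ((s : ℂ) + t))))) /
      (2 * (s : ℂ)))) = w
  rw [harg, key]
  have hsne : (s : ℂ) ≠ 0 := Complex.ofReal_ne_zero.mpr (ne_of_gt hs)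
  have hstne : ((s : ℂ) + t) ≠ 0 := by
    have : ((s + t : ℝ) : ℂ) ≠ 0 := Complex.ofReal_ne_zero.mpr (by positivity)
    push_cast at this; exact this
  simp only [Zfun, Cfun]
  field_simp
  ring
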